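/- Let φ₀, φ₁ : I → I be strictly increasing maps and fix x ∈ I. For s, t extended reals, if the itinerary σ(x|s) is lexicographically greater than σ(x|t), then s < t. In other words, σ(x|s) is a lexicographically non-increasing function of the threshold s. -/
import Mathlib


open scoped Classical

/-- The orbit of the map-with-a-gap with threshold `s ∈ [-∞,∞]` started at `x`:
index `t` is the paper's `x_{t+1}` (index `0` is the start `x₁ = x`), with
`x_{t+1} = φ₁ x_t` if `x_t ≥ s` and `x_{t+1} = φ₀ x_t` otherwise. -/
noncomputable def itinOrbit (φ0 φ1 : ℝ → ℝ) (s : EReal) (x : ℝ) : ℕ → ℝ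
  | 0 => x
  | n + 1 =>
      if s ≤ ((itinOrbit φ0 φ1 s x n : ℝ) : EReal) then φ1 (itinOrbit φ0 φ1 s x n)
      else φ0 (itinOrbit φ0 φ1 s x n)

/-- The itinerary `σ(x|s)`: its `t`-th letter (0-indexed) is `1` iff `x_{t+1} ≥ s`. -/
noncomputable def itin (φ0 φ1 : ℝ → ℝ) (s : EReal) (x : ℝ) (t : ℕ) : Bool :=
  if s ≤ ((itinOrbit φ0 φ1 s x t : ℝ) : EReal) then true else false

/-- Strict lexicographic order on infinite binary words (`false` = 0 ≺ `true` = 1). -/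
def LexLt (u v : ℕ → Bool) : Prop :=
  ∃ k, (∀ j < k, u j = v j) ∧ u k = false ∧ v k = true

/-- For strictly increasing maps `φ₀, φ₁ : I → I` and fixed `x ∈ I`,
if `σ(x|s)` is lexicographically greater than `σ(x|t)` then `s < t`; i.e. the itinerary
is a lexicographically non-increasing function of the threshold. -/
theorem stmt_14 (I : Set ℝ) (hI : I.OrdConnected) (φ0 φ1 : ℝ → ℝ)
    (h0maps : Set.MapsTo φ0 I I) (h1maps : Set.MapsTo φ1 I I)
    (h0inc : ∀ x ∈ I, ∀ y ∈ I, x < y → φ0 x < φ0 y)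
    (h1inc : ∀ x ∈ I, ∀ y ∈ I, x < y → φ1 x < φ1 y)
    (x : ℝ) (hx : x ∈ I) (s t : EReal)
    (h : LexLt (itin φ0 φ1 t x) (itin φ0 φ1 s x)) :
    s < t := by
  -- orbits stay in I
  have hmem : ∀ (u : EReal) (n : ℕ), itinOrbit φ0 φ1 u x n ∈ I := by
    intro u n
    induction n with
    | zero => exact hx
    | succ n ih =>
      show (if u ≤ ((itinOrbit φ0 φ1 u x n : ℝ) : EReal) then φ1 (itinOrbit φ0 φ1 u x n)
          else φ0 (itinOrbit φ0 φ1 u x n)) ∈ I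
      split
      · exact h1maps ih
      · exact h0maps ih
  have h0mono : ∀ a ∈ I, ∀ b ∈ I, a ≤ b → φ0 a ≤ φ0 b := by
    intro a ha b hb hab
    rcases hab.lt_or_eq with h' | h'
    · exact (h0inc a ha b hb h').le
    · rw [h']
  have h1mono : ∀ a ∈ I, ∀ b ∈ I, a ≤ b → φ1 a ≤ φ1 b := by
    intro a ha b hb hab
    rcases hab.lt_or_eq with h' | h'
    · exact (h1inc a ha b hb h').le
    · rw [h']
  by_contra hst
  push_neg at hst
  -- hst : t ≤ s
  obtain ⟨k, hagree, hfalse, htrue⟩ := h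
  -- key : orbits compare while itineraries agree
  have key : ∀ n, (∀ j < n, itin φ0 φ1 t x j = itin φ0 φ1 s x j) →
      itinOrbit φ0 φ1 s x n ≤ itinOrbit φ0 φ1 t x n := by
    intro n
    induction n with
    | zero => intro _; exact le_refl x
    | succ n ih =>
      intro hag
      have hle : itinOrbit φ0 φ1 s x n ≤ itinOrbit φ0 φ1 t x n :=
        ih fun j hj => hag j (hj.trans (Nat.lt_succ_self n))
      have hagn : itin φ0 φ1 t x n = itin φ0 φ1 s x n := hag n (Nat.lt_succ_self n)
      show (if s ≤ ((itinOrbit φ0 φ1 s x n : ℝ) : EReal) then φ1 (itinOrbit φ0 φ1 s x n)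
          else φ0 (itinOrbit φ0 φ1 s x n)) ≤
        (if t ≤ ((itinOrbit φ0 φ1 t x n : ℝ) : EReal) then φ1 (itinOrbit φ0 φ1 t x n)
          else φ0 (itinOrbit φ0 φ1 t x n))
      by_cases hs : s ≤ ((itinOrbit φ0 φ1 s x n : ℝ) : EReal)
      · have hsn : itin φ0 φ1 s x n = true := by simp [itin, hs]
        have htn : itin φ0 φ1 t x n = true := hagn.trans hsn
        have ht' : t ≤ ((itinOrbit φ0 φ1 t x n : ℝ) : EReal) := by
          by_contra hc; simp [itin, hc] at htn
        rw [if_pos hs, if_pos ht']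
        exact h1mono _ (hmem s n) _ (hmem t n) hle
      · have hsn : itin φ0 φ1 s x n = false := by simp [itin, hs]
        have htn : itin φ0 φ1 t x n = false := hagn.trans hsn
        have ht' : ¬ t ≤ ((itinOrbit φ0 φ1 t x n : ℝ) : EReal) := by
          intro hc; simp [itin, hc] at htn
        rw [if_neg hs, if_neg ht']
        exact h0mono _ (hmem s n) _ (hmem t n) hle
  have hlek : itinOrbit φ0 φ1 s x k ≤ itinOrbit φ0 φ1 t x k := key k hagree
  have hs : s ≤ ((itinOrbit φ0 φ1 s x k : ℝ) : EReal) := by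
    by_contra hc; simp [itin, hc] at htrue
  have ht : ¬ t ≤ ((itinOrbit φ0 φ1 t x k : ℝ) : EReal) := by
    intro hc; simp [itin, hc] at hfalse
  push_neg at ht
  exact absurd hst (not_le.mpr (lt_of_le_of_lt
    (hs.trans (EReal.coe_le_coe_iff.mpr hlek)) ht))
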